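/- Let c > 0 and let (u^{(n)})_{n∈ℕ}, with u^{(n)} = (u^{(n)}_1,…,u^{(n)}_S), be a sequence of S-tuples of functions Ω → ℝ such that (a) for every n, every s and every pixel p with p+a_s ∈ Ω, either u^{(n)}_s(p+a_s) = u^{(n)}_s(p) or |u^{(n)}_s(p+a_s) − u^{(n)}_s(p)| ≥ c, and (b) ‖u^{(n+1)} − u^{(n)}‖₂ → 0 as n → ∞. Then the induced jump patterns eventually become constant: there is N₀ ∈ ℕ such that for all n ≥ N₀, { (s,p) : p+a_s ∈ Ω and u^{(n)}_s(p+a_s) ≠ u^{(n)}_s(p) } = { (s,p) : p+a_s ∈ Ω and u^{(N₀)}_s(p+a_s) ≠ u^{(N₀)}_s(p) }. -/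

import Mathlib

open Finset Filter
set_option maxHeartbeats 1000000

/-- The discrete image domain `Ω = {0,…,M−1} × {0,…,N−1} ⊆ ℤ²`. -/
noncomputable def gridDomain (M N : ℕ) : Finset (ℤ × ℤ) :=
  (Finset.Ico (0 : ℤ) (M : ℤ)) ×ˢ (Finset.Ico (0 : ℤ) (N : ℤ))

/-- Pixels of the image domain. -/
abbrev Pix (M N : ℕ) := {p : ℤ × ℤ // p ∈ gridDomain M N}

/-- The jump pattern of a tuple `u = (u_1,…,u_S)`: the pairs `(s,p)` such that `u_s`
jumps in direction `a_s` at pixel `p`. -/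
def jumpPattern (M N S : ℕ) (a : Fin S → ℤ × ℤ) (u : Fin S → Pix M N → ℝ) :
    Set (Fin S × Pix M N) :=
  {sp | ∃ h : (sp.2 : ℤ × ℤ) + a sp.1 ∈ gridDomain M N,
    u sp.1 ⟨(sp.2 : ℤ × ℤ) + a sp.1, h⟩ ≠ u sp.1 sp.2}

/-- if all tuples of a sequence have minimal directional jump height
`c > 0` and consecutive iterates satisfy `‖u^{(n+1)} − u^{(n)}‖₂ → 0`, then the induced
jump patterns eventually become constant. -/
theorem jump_patterns_eventually_constant (M N S : ℕ)
    (hM : 1 ≤ M) (hN : 1 ≤ N) (hS : 1 ≤ S)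
    (a : Fin S → ℤ × ℤ) (ha : ∀ s, a s ≠ 0)
    (c : ℝ) (hc : 0 < c)
    (u : ℕ → Fin S → Pix M N → ℝ)
    (hjump : ∀ (n : ℕ) (s : Fin S) (p : Pix M N)
      (hq : (p : ℤ × ℤ) + a s ∈ gridDomain M N),
      u n s ⟨(p : ℤ × ℤ) + a s, hq⟩ = u n s p ∨
        c ≤ |u n s ⟨(p : ℤ × ℤ) + a s, hq⟩ - u n s p|)
    (hstep : Tendsto
      (fun n : ℕ => Real.sqrt (∑ s, ∑ p, (u (n + 1) s p - u n s p) ^ 2))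
      atTop (nhds 0)) :
    ∃ N₀ : ℕ, ∀ n ≥ N₀,
      jumpPattern M N S a (u n) = jumpPattern M N S a (u N₀) := by
  -- find N₀ with the sqrt-sum < c/2 for n ≥ N₀
  have hev : ∀ᶠ n in atTop,
      Real.sqrt (∑ s, ∑ p, (u (n + 1) s p - u n s p) ^ 2) < c / 2 := by
    have := hstep.eventually (eventually_lt_nhds (show (0:ℝ) < c / 2 by linarith))
    exact this
  obtain ⟨N₀, hN₀⟩ := eventually_atTop.1 hev
  -- pointwise bound
  have hpt : ∀ n ≥ N₀, ∀ (s : Fin S) (p : Pix M N),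
      |u (n + 1) s p - u n s p| < c / 2 := by
    intro n hn s p
    have hsum := hN₀ n hn
    have h1 : (u (n + 1) s p - u n s p) ^ 2 ≤
        ∑ s', ∑ p', (u (n + 1) s' p' - u n s' p') ^ 2 := by
      calc (u (n + 1) s p - u n s p) ^ 2
          ≤ ∑ p', (u (n + 1) s p' - u n s p') ^ 2 :=
            Finset.single_le_sum
              (f := fun p' => (u (n + 1) s p' - u n s p') ^ 2)
              (fun i _ => sq_nonneg _) (Finset.mem_univ p)
        _ ≤ ∑ s', ∑ p', (u (n + 1) s' p' - u n s' p') ^ 2 :=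
            Finset.single_le_sum
              (f := fun s' => ∑ p', (u (n + 1) s' p' - u n s' p') ^ 2)
              (fun i _ => Finset.sum_nonneg fun j _ => sq_nonneg _)
              (Finset.mem_univ s)
    have h2 : |u (n + 1) s p - u n s p| ≤
        Real.sqrt (∑ s', ∑ p', (u (n + 1) s' p' - u n s' p') ^ 2) := by
      rw [← Real.sqrt_sq_eq_abs]
      exact Real.sqrt_le_sqrt h1
    linarith
  -- consecutive patterns agree from N₀ on
  have hcons : ∀ n ≥ N₀,
      jumpPattern M N S a (u (n + 1)) = jumpPattern M N S a (u n) := by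
    intro n hn
    ext ⟨s, p⟩
    simp only [jumpPattern, Set.mem_setOf_eq]
    constructor
    · rintro ⟨h, hne⟩
      refine ⟨h, fun heq => hne ?_⟩
      rcases hjump (n + 1) s p h with h' | h'
      · exact h'
      · exfalso
        have b1 := hpt n hn s ⟨(p : ℤ × ℤ) + a s, h⟩
        have b2 := hpt n hn s p
        have t1 : |u (n+1) s ⟨(p : ℤ × ℤ) + a s, h⟩ - u (n+1) s p| ≤
            |u (n+1) s ⟨(p : ℤ × ℤ) + a s, h⟩ - u n s ⟨(p : ℤ × ℤ) + a s, h⟩|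
            + |u n s ⟨(p : ℤ × ℤ) + a s, h⟩ - u (n+1) s p| := abs_sub_le _ _ _
        have t2 : |u n s ⟨(p : ℤ × ℤ) + a s, h⟩ - u (n+1) s p| ≤
            |u n s ⟨(p : ℤ × ℤ) + a s, h⟩ - u n s p|
            + |u n s p - u (n+1) s p| := abs_sub_le _ _ _
        have h0 : |u n s ⟨(p : ℤ × ℤ) + a s, h⟩ - u n s p| = 0 := by
          rw [heq, sub_self, abs_zero]
        have h3 : |u n s p - u (n+1) s p| = |u (n+1) s p - u n s p| :=
          abs_sub_comm _ _
        linarith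
    · rintro ⟨h, hne⟩
      refine ⟨h, fun heq => hne ?_⟩
      rcases hjump n s p h with h' | h'
      · exact h'
      · exfalso
        have b1 := hpt n hn s ⟨(p : ℤ × ℤ) + a s, h⟩
        have b2 := hpt n hn s p
        have t1 : |u n s ⟨(p : ℤ × ℤ) + a s, h⟩ - u n s p| ≤
            |u n s ⟨(p : ℤ × ℤ) + a s, h⟩ - u (n+1) s ⟨(p : ℤ × ℤ) + a s, h⟩|
            + |u (n+1) s ⟨(p : ℤ × ℤ) + a s, h⟩ - u n s p| := abs_sub_le _ _ _
        have t2 : |u (n+1) s ⟨(p : ℤ × ℤ) + a s, h⟩ - u n s p| ≤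
            |u (n+1) s ⟨(p : ℤ × ℤ) + a s, h⟩ - u (n+1) s p|
            + |u (n+1) s p - u n s p| := abs_sub_le _ _ _
        have h0 : |u (n+1) s ⟨(p : ℤ × ℤ) + a s, h⟩ - u (n+1) s p| = 0 := by
          rw [heq, sub_self, abs_zero]
        have h3 : |u n s ⟨(p : ℤ × ℤ) + a s, h⟩ - u (n+1) s ⟨(p : ℤ × ℤ) + a s, h⟩|
            = |u (n+1) s ⟨(p : ℤ × ℤ) + a s, h⟩ - u n s ⟨(p : ℤ × ℤ) + a s, h⟩| :=
          abs_sub_comm _ _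
        linarith
  refine ⟨N₀, fun n hn => ?_⟩
  induction n with
  | zero =>
    have : N₀ = 0 := Nat.le_zero.mp hn
    rw [this]
  | succ m ih =>
    rcases Nat.lt_or_ge N₀ (m + 1) with hlt | hge
    · have hm : m ≥ N₀ := Nat.lt_succ_iff.mp hlt
      rw [hcons m hm, ih hm]
    · have : N₀ = m + 1 := le_antisymm hn hge
      rw [this]
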